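/- For |α| < 1, the first derivatives of the two branches of E_α also agree at s* = 2√(1+α²-α⁴): both equal √(1+α²-α⁴)/(2√(1-α⁴)). -/

import Mathlib

theorem stmt_11 (α : ℝ) (hα0 : 0 < |α|) (hα1 : |α| < 1) :
    HasDerivAt (fun s : ℝ => Real.sqrt (s^2/4 - α^2))
      (Real.sqrt (1 + α^2 - α^4) / (2 * Real.sqrt (1 - α^4)))
      (2 * Real.sqrt (1 + α^2 - α^4)) ∧
    HasDerivAt
      (fun s : ℝ =>
        Real.sqrt (1 - (1 - (1/|α|) * Real.sqrt ((1 - α^2) * (s^2/4 - 1)))^2))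
      (Real.sqrt (1 + α^2 - α^4) / (2 * Real.sqrt (1 - α^4)))
      (2 * Real.sqrt (1 + α^2 - α^4)) := by
  have hαne : α ≠ 0 := by
    intro h; rw [h, abs_zero] at hα0; exact lt_irrefl 0 hα0
  have habs : |α|^2 = α^2 := sq_abs α
  have ha0 : 0 < α^2 := by positivity
  have ha1 : α^2 < 1 := by nlinarith [abs_nonneg α]
  set s₀ : ℝ := 2 * Real.sqrt (1 + α^2 - α^4) with hs₀
  have hpos : 0 < 1 + α^2 - α^4 := by nlinarith
  have hs0sq : s₀^2 = 4*(1+α^2-α^4) := by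
    rw [hs₀, mul_pow, Real.sq_sqrt hpos.le]; ring
  have hhalf : s₀/2 = Real.sqrt (1+α^2-α^4) := by rw [hs₀]; ring
  have h14 : 0 < 1 - α^4 := by nlinarith
  have hbase : ∀ c : ℝ, HasDerivAt (fun s : ℝ => s^2/4 - c) (s₀/2) s₀ := by
    intro c
    have h := (((hasDerivAt_id s₀).pow 2).div_const 4).sub_const c
    refine h.congr_deriv ?_
    simp; ring
  constructor
  · have h := (hbase (α^2)).sqrt (by rw [hs0sq]; intro h; nlinarith)
    convert h using 2
    · rw [hhalf]
    · rw [hs0sq]; ring_nf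
  · have hu : HasDerivAt (fun s : ℝ => (1-α^2)*(s^2/4-1)) ((1-α^2)*(s₀/2)) s₀ :=
      (hbase 1).const_mul _
    have hu0 : (1-α^2)*(s₀^2/4-1) = (|α| * (1-α^2))^2 := by
      rw [hs0sq]; nlinarith [sq_abs α]
    have hmul : 0 < |α| * (1-α^2) := mul_pos hα0 (by nlinarith)
    have hsqrtu : Real.sqrt ((1-α^2)*(s₀^2/4-1)) = |α| * (1-α^2) := by
      rw [hu0, Real.sqrt_sq hmul.le]
    have hune : (1-α^2)*(s₀^2/4-1) ≠ 0 := by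
      rw [hu0]; exact ne_of_gt (pow_pos hmul 2)
    have hv := hu.sqrt hune
    have hw := ((hv.const_mul (1/|α|)).const_sub 1)
    have hw0 : 1 - (1/|α|) * Real.sqrt ((1-α^2)*(s₀^2/4-1)) = α^2 := by
      rw [hsqrtu]; field_simp; ring
    have hp := (hw.pow 2).const_sub 1
    simp only [Pi.pow_apply] at hp
    have hp0 : 1 - (1 - (1/|α|) * Real.sqrt ((1-α^2)*(s₀^2/4-1)))^2 = 1 - α^4 := by
      rw [hw0]; ring
    have hg := hp.sqrt (by rw [hp0]; exact ne_of_gt h14)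
    convert hg using 1
    rw [hp0, hw0, hsqrtu, ← hhalf]
    have habsne : |α| ≠ 0 := ne_of_gt hα0
    have h12 : (1:ℝ) - α^2 ≠ 0 := by nlinarith
    field_simp
    ring_nf
    rw [habs]
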